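/- (Gronwall lemma with algebraic kernels) Suppose p > 1, C₁ ≥ 1 and C₂, ε > 0 satisfy ε ≤ 1/(9 C₁ C₂ C₃), where C₃ := 2^{p-1} p/(p-1). Let T > 0 and let φ : [0,T) → [0,∞) be continuous and satisfy φ(t) ≤ C₁ ε (1+t)^{-p} + C₂ ∫_0^t (ε + φ(s)) φ(s) (1+t-s)^{-p} ds for all t ∈ [0,T). Then φ(t) ≤ 3 C₁ ε (1+t)^{-(p-1)} for all t ∈ [0,T). -/

import Mathlib

open MeasureTheory intervalIntegral

lemma conv_bound (p : ℝ) (hp : 1 < p) (u : ℝ) (hu : 0 ≤ u) :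
    (∫ s in (0:ℝ)..u, (1 + s) ^ (-(p - 1)) * (1 + u - s) ^ (-p))
      ≤ 2 ^ (p - 1) * p / (p - 1) * (1 + u) ^ (-(p - 1)) := by
  have hp1 : (0:ℝ) < p - 1 := by linarith
  have h1u : (0:ℝ) < 1 + u := by linarith
  set A : ℝ := (1 + u) ^ (-(p - 1)) with hAdef
  have hA : 0 < A := Real.rpow_pos_of_pos h1u _
  -- continuity
  have hbc : ContinuousOn (fun s : ℝ => (1 + s) ^ (-(p - 1))) (Set.Icc 0 u) := by
    apply ContinuousOn.rpow_const ((continuous_const.add continuous_id).continuousOn)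
    intro x hx; left; simp only [Pi.add_apply, Pi.sub_apply, id_eq]; have := hx.1; intro h; linarith
  have hkc : ContinuousOn (fun s : ℝ => (1 + u - s) ^ (-p)) (Set.Icc 0 u) := by
    apply ContinuousOn.rpow_const ((continuous_const.sub continuous_id).continuousOn)
    intro x hx; left; simp only [Pi.add_apply, Pi.sub_apply, id_eq]; have := hx.2; intro h; linarith
  have hfc : ContinuousOn (fun s : ℝ => (1 + s) ^ (-(p - 1)) * (1 + u - s) ^ (-p))
      (Set.Icc 0 u) := hbc.mul hkc
  have hi1 : IntervalIntegrable (fun s : ℝ => (1 + s) ^ (-(p - 1)) * (1 + u - s) ^ (-p))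
      volume 0 (u/2) :=
    (hfc.mono (Set.Icc_subset_Icc le_rfl (by linarith))).intervalIntegrable_of_Icc (by linarith)
  have hi2 : IntervalIntegrable (fun s : ℝ => (1 + s) ^ (-(p - 1)) * (1 + u - s) ^ (-p))
      volume (u/2) u :=
    (hfc.mono (Set.Icc_subset_Icc (by linarith) le_rfl)).intervalIntegrable_of_Icc (by linarith)
  -- key base comparison
  have h2A : (1 + u/2) ^ (-(p - 1)) ≤ 2 ^ (p - 1) * A := by
    have h2 : (1 + u)/2 ≤ 1 + u/2 := by linarith
    have hstep := Real.rpow_le_rpow_of_nonpos (by linarith : (0:ℝ) < (1+u)/2) h2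
      (by linarith : -(p-1) ≤ 0)
    refine hstep.trans_eq ?_
    rw [Real.div_rpow h1u.le (by norm_num : (0:ℝ) ≤ 2), Real.rpow_neg (by norm_num : (0:ℝ) ≤ 2),
      div_eq_mul_inv, inv_inv]
    ring
  -- bound the first piece
  have hb1 : (∫ s in (0:ℝ)..(u/2), (1 + s) ^ (-(p - 1)) * (1 + u - s) ^ (-p))
      ≤ 2 ^ (p - 1) * A := by
    have hpt : ∀ x ∈ Set.Icc (0:ℝ) (u/2),
        (1 + x) ^ (-(p - 1)) * (1 + u - x) ^ (-p) ≤ (1 + u/2) ^ (-p) := by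
      intro x hx
      have h1 : (1 + x) ^ (-(p - 1)) ≤ 1 :=
        Real.rpow_le_one_of_one_le_of_nonpos (by linarith [hx.1]) (by linarith)
      have h2 : (1 + u - x) ^ (-p) ≤ (1 + u/2) ^ (-p) :=
        Real.rpow_le_rpow_of_nonpos (by linarith : (0:ℝ) < 1 + u/2)
          (by linarith [hx.2]) (by linarith)
      have h3 : (0:ℝ) ≤ (1 + u - x) ^ (-p) :=
        Real.rpow_nonneg (by linarith [hx.1, hx.2]) _
      exact (mul_le_of_le_one_left h3 h1).trans h2
    have := intervalIntegral.integral_mono_on (by linarith : (0:ℝ) ≤ u/2) hi1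
      intervalIntegrable_const hpt
    rw [intervalIntegral.integral_const, smul_eq_mul, sub_zero] at this
    refine this.trans ?_
    -- (u/2) * (1+u/2)^(-p) ≤ 2^(p-1) * A
    have hsp : ((1:ℝ) + u/2) ^ (-p)
        = (1 + u/2) ^ (-(p - 1)) * (1 + u/2) ^ (-(1:ℝ)) := by
      rw [← Real.rpow_add (by linarith : (0:ℝ) < 1 + u/2)]
      congr 1; ring
    have hfrac : (u/2) * (1 + u/2) ^ (-(1:ℝ)) ≤ 1 := by
      rw [Real.rpow_neg_one, ← div_eq_mul_inv]
      exact div_le_one_of_le₀ (by linarith) (by linarith)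
    calc (u/2) * (1 + u/2) ^ (-p)
        = ((u/2) * (1 + u/2) ^ (-(1:ℝ))) * (1 + u/2) ^ (-(p - 1)) := by rw [hsp]; ring
      _ ≤ 1 * (2 ^ (p - 1) * A) :=
          mul_le_mul hfrac h2A (Real.rpow_nonneg (by linarith) _) zero_le_one
      _ = 2 ^ (p - 1) * A := one_mul _
  -- bound the second piece
  have hb2 : (∫ s in (u/2)..u, (1 + s) ^ (-(p - 1)) * (1 + u - s) ^ (-p))
      ≤ 2 ^ (p - 1) * A * (1 / (p - 1)) := by
    have hkc' : ContinuousOn (fun s : ℝ => (1 + u - s) ^ (-p)) (Set.Icc (u/2) u) :=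
      hkc.mono (Set.Icc_subset_Icc (by linarith) le_rfl)
    have hpt : ∀ x ∈ Set.Icc (u/2) u,
        (1 + x) ^ (-(p - 1)) * (1 + u - x) ^ (-p)
          ≤ 2 ^ (p - 1) * A * (1 + u - x) ^ (-p) := by
      intro x hx
      have h1 : (1 + x) ^ (-(p - 1)) ≤ 2 ^ (p - 1) * A := by
        refine (Real.rpow_le_rpow_of_nonpos (by linarith : (0:ℝ) < 1 + u/2)
          (by linarith [hx.1]) (by linarith : -(p-1) ≤ 0)).trans h2A
      exact mul_le_mul_of_nonneg_right h1 (Real.rpow_nonneg (by linarith [hx.2]) _)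
    have hiK : IntervalIntegrable (fun x : ℝ => 2 ^ (p - 1) * A * (1 + u - x) ^ (-p))
        volume (u/2) u :=
      (continuousOn_const.mul hkc').intervalIntegrable_of_Icc (by linarith)
    have h := intervalIntegral.integral_mono_on (by linarith : u/2 ≤ u) hi2 hiK hpt
    rw [intervalIntegral.integral_const_mul] at h
    refine h.trans (mul_le_mul_of_nonneg_left ?_ (by positivity))
    -- ∫ x in u/2..u, (1+u-x)^(-p) ≤ 1/(p-1)
    have hcomp : (∫ x in (u/2)..u, (1 + u - x) ^ (-p))
        = ∫ y in (1:ℝ)..(1 + u/2), y ^ (-p) := by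
      have e0 : (∫ x in (u/2)..u, (1 + u - x) ^ (-p))
          = ∫ x in (u/2)..u, (fun y : ℝ => (1 + y) ^ (-p)) (u - x) := by
        congr 1; funext x; rw [add_sub_assoc]
      rw [e0, intervalIntegral.integral_comp_sub_left (fun y : ℝ => (1 + y) ^ (-p)) u]
      have e1 : u - u = 0 := by ring
      have e2 : u - u/2 = u/2 := by ring
      rw [e1, e2]
      have e3 : (∫ x in (0:ℝ)..(u/2), (1 + x) ^ (-p))
          = ∫ x in (0:ℝ)..(u/2), (fun y : ℝ => y ^ (-p)) (1 + x) := rfl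
      rw [e3, intervalIntegral.integral_comp_add_left (fun y : ℝ => y ^ (-p)) 1]
      norm_num
    rw [hcomp, integral_rpow (Or.inr ⟨by linarith, by
      rw [Set.uIcc_of_le (by linarith : (1:ℝ) ≤ 1 + u/2)]
      intro h0; exact absurd h0.1 (by norm_num)⟩)]
    rw [Real.one_rpow]
    have heq : (-p + 1) = -(p - 1) := by ring
    have hX : (0:ℝ) ≤ (1 + u/2) ^ (-p + 1) := Real.rpow_nonneg (by linarith) _
    rw [heq] at hX ⊢
    have hrw : ((1 + u/2) ^ (-(p - 1)) - 1) / (-(p - 1))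
        = (1 - (1 + u/2) ^ (-(p - 1))) / (p - 1) := by
      rw [div_neg, ← neg_div, neg_sub]
    rw [hrw]
    gcongr
    · linarith
  -- combine
  calc (∫ s in (0:ℝ)..u, (1 + s) ^ (-(p - 1)) * (1 + u - s) ^ (-p))
      = (∫ s in (0:ℝ)..(u/2), (1 + s) ^ (-(p - 1)) * (1 + u - s) ^ (-p))
        + ∫ s in (u/2)..u, (1 + s) ^ (-(p - 1)) * (1 + u - s) ^ (-p) :=
        (intervalIntegral.integral_add_adjacent_intervals hi1 hi2).symm
    _ ≤ 2 ^ (p - 1) * A + 2 ^ (p - 1) * A * (1 / (p - 1)) := add_le_add hb1 hb2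
    _ = 2 ^ (p - 1) * p / (p - 1) * A := by
        field_simp
        ring

set_option maxHeartbeats 1000000 in
/-- Gronwall lemma with algebraic integral kernels (Lemma 5.2). -/
theorem stmt_5 (p C₁ C₂ ε T : ℝ) (hp : 1 < p) (hC₁ : 1 ≤ C₁) (hC₂ : 0 < C₂)
    (hε : 0 < ε)
    (hεle : ε ≤ 1 / (9 * C₁ * C₂ * (2 ^ (p - 1) * p / (p - 1))))
    (hT : 0 < T) (φ : ℝ → ℝ)
    (hcont : ContinuousOn φ (Set.Ico 0 T))
    (hnonneg : ∀ t ∈ Set.Ico (0:ℝ) T, 0 ≤ φ t)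
    (hineq : ∀ t ∈ Set.Ico (0:ℝ) T,
      φ t ≤ C₁ * ε * (1 + t) ^ (-p) +
        C₂ * ∫ s in (0:ℝ)..t, (ε + φ s) * φ s * (1 + t - s) ^ (-p)) :
    ∀ t ∈ Set.Ico (0:ℝ) T, φ t ≤ 3 * C₁ * ε * (1 + t) ^ (-(p - 1)) := by
  have hp1 : (0:ℝ) < p - 1 := by linarith
  have hC₃ : (0:ℝ) < 2 ^ (p - 1) * p / (p - 1) := by
    have h2 : (0:ℝ) < 2 ^ (p - 1) := Real.rpow_pos_of_pos (by norm_num) _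
    positivity
  set C₃ : ℝ := 2 ^ (p - 1) * p / (p - 1) with hC₃def
  have hεC₃ : ε * (9 * C₁ * C₂ * C₃) ≤ 1 := by
    rw [← le_div_iff₀ (by positivity)]
    exact hεle
  intro t ht
  by_contra hbad
  push_neg at hbad
  -- the "bad" set is closed and nonempty in [0, t]
  set bad : Set ℝ :=
    Set.Icc 0 t ∩ (fun s => φ s - 3 * C₁ * ε * (1 + s) ^ (-(p - 1))) ⁻¹' Set.Ici 0 with hbaddef
  have hIccsub : Set.Icc (0:ℝ) t ⊆ Set.Ico 0 T :=
    fun x hx => ⟨hx.1, lt_of_le_of_lt hx.2 ht.2⟩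
  have hφt : ContinuousOn φ (Set.Icc 0 t) := hcont.mono hIccsub
  have hBc : ContinuousOn (fun s : ℝ => 3 * C₁ * ε * (1 + s) ^ (-(p - 1))) (Set.Icc 0 t) := by
    apply ContinuousOn.mul continuousOn_const
    apply ContinuousOn.rpow_const ((continuous_const.add continuous_id).continuousOn)
    intro x hx; left; simp only [Pi.add_apply, Pi.sub_apply, id_eq]; have := hx.1; intro h; linarith
  have hclosed : IsClosed bad := by
    apply ContinuousOn.preimage_isClosed_of_isClosed (hφt.sub hBc) isClosed_Icc isClosed_Ici
  have hne : bad.Nonempty := ⟨t, ⟨⟨ht.1, le_rfl⟩, by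
    simp only [Set.mem_preimage, Set.mem_Ici]; linarith⟩⟩
  have hbdd : BddBelow bad := ⟨0, fun x hx => hx.1.1⟩
  set u : ℝ := sInf bad with hudef
  have humem : u ∈ bad := hclosed.csInf_mem hne hbdd
  have hu0 : 0 ≤ u := humem.1.1
  have hut : u ≤ t := humem.1.2
  have huT : u < T := lt_of_le_of_lt hut ht.2
  have huIco : u ∈ Set.Ico (0:ℝ) T := ⟨hu0, huT⟩
  have h1u : (0:ℝ) < 1 + u := by linarith
  have hulb : 3 * C₁ * ε * (1 + u) ^ (-(p - 1)) ≤ φ u := by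
    have := humem.2
    simp only [Set.mem_preimage, Set.mem_Ici] at this
    linarith
  -- below u the good bound holds
  have hsmall : ∀ s, 0 ≤ s → s < u → φ s ≤ 3 * C₁ * ε * (1 + s) ^ (-(p - 1)) := by
    intro s hs0 hsu
    by_contra hc
    push_neg at hc
    have hsmem : s ∈ bad := ⟨⟨hs0, le_trans hsu.le hut⟩, by
      simp only [Set.mem_preimage, Set.mem_Ici]; linarith⟩
    exact absurd (csInf_le hbdd hsmem) (not_le.mpr hsu)
  -- integrability
  have hIccu : Set.Icc (0:ℝ) u ⊆ Set.Ico 0 T :=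
    fun x hx => ⟨hx.1, lt_of_le_of_lt hx.2 huT⟩
  have hφu : ContinuousOn φ (Set.Icc 0 u) := hcont.mono hIccu
  have hkc : ContinuousOn (fun s : ℝ => (1 + u - s) ^ (-p)) (Set.Icc 0 u) := by
    apply ContinuousOn.rpow_const ((continuous_const.sub continuous_id).continuousOn)
    intro x hx; left; simp only [Pi.add_apply, Pi.sub_apply, id_eq]; have := hx.2; intro h; linarith
  have hbc : ContinuousOn (fun s : ℝ => (1 + s) ^ (-(p - 1))) (Set.Icc 0 u) := by
    apply ContinuousOn.rpow_const ((continuous_const.add continuous_id).continuousOn)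
    intro x hx; left; simp only [Pi.add_apply, Pi.sub_apply, id_eq]; have := hx.1; intro h; linarith
  have hint1 : IntervalIntegrable (fun s => (ε + φ s) * φ s * (1 + u - s) ^ (-p))
      volume 0 u :=
    (((continuousOn_const.add hφu).mul hφu).mul hkc).intervalIntegrable_of_Icc hu0
  have hint2 : IntervalIntegrable
      (fun s => 12 * C₁ ^ 2 * ε ^ 2 * ((1 + s) ^ (-(p - 1)) * (1 + u - s) ^ (-p)))
      volume 0 u :=
    (continuousOn_const.mul (hbc.mul hkc)).intervalIntegrable_of_Icc hu0
  -- a.e. pointwise bound on [0,u]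
  have hae : (fun s => (ε + φ s) * φ s * (1 + u - s) ^ (-p))
      ≤ᵐ[volume.restrict (Set.Icc 0 u)]
      (fun s => 12 * C₁ ^ 2 * ε ^ 2 * ((1 + s) ^ (-(p - 1)) * (1 + u - s) ^ (-p))) := by
    have hmem : ∀ᵐ x ∂(volume.restrict (Set.Icc (0:ℝ) u)), x ∈ Set.Icc (0:ℝ) u :=
      ae_restrict_mem measurableSet_Icc
    have hne_u : ∀ᵐ (x:ℝ) ∂(volume.restrict (Set.Icc (0:ℝ) u)), x ≠ u := by
      refine Filter.Eventually.filter_mono (MeasureTheory.ae_mono Measure.restrict_le_self) ?_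
      rw [Filter.eventually_iff, mem_ae_iff]
      have hset : {x : ℝ | x ≠ u}ᶜ = {u} := by ext x; simp
      rw [hset]
      exact measure_singleton u
    filter_upwards [hmem, hne_u] with x hx hxu
    have hxu' : x < u := lt_of_le_of_ne hx.2 hxu
    have hφx : φ x ≤ 3 * C₁ * ε * (1 + x) ^ (-(p - 1)) := hsmall x hx.1 hxu'
    have hφx0 : 0 ≤ φ x := hnonneg x ⟨hx.1, lt_trans hxu' huT⟩
    have hb1 : (1 + x) ^ (-(p - 1)) ≤ 1 :=
      Real.rpow_le_one_of_one_le_of_nonpos (by linarith [hx.1]) (by linarith)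
    have hb0 : (0:ℝ) ≤ (1 + x) ^ (-(p - 1)) := Real.rpow_nonneg (by linarith [hx.1]) _
    have hk0 : (0:ℝ) ≤ (1 + u - x) ^ (-p) := Real.rpow_nonneg (by linarith [hx.2]) _
    have hinner : (ε + φ x) * φ x ≤ 12 * C₁ ^ 2 * ε ^ 2 * (1 + x) ^ (-(p - 1)) := by
      have h1 : ε + φ x ≤ 4 * C₁ * ε := by nlinarith
      have h2 : φ x ≤ 3 * C₁ * ε * (1 + x) ^ (-(p - 1)) := hφx
      nlinarith [mul_le_mul h1 h2 hφx0 (by positivity : (0:ℝ) ≤ 4 * C₁ * ε)]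
    calc (ε + φ x) * φ x * (1 + u - x) ^ (-p)
        ≤ 12 * C₁ ^ 2 * ε ^ 2 * (1 + x) ^ (-(p - 1)) * (1 + u - x) ^ (-p) :=
          mul_le_mul_of_nonneg_right hinner hk0
      _ = 12 * C₁ ^ 2 * ε ^ 2 * ((1 + x) ^ (-(p - 1)) * (1 + u - x) ^ (-p)) := by ring
  have hJ : (∫ s in (0:ℝ)..u, (ε + φ s) * φ s * (1 + u - s) ^ (-p))
      ≤ 12 * C₁ ^ 2 * ε ^ 2 * ∫ s in (0:ℝ)..u, (1 + s) ^ (-(p - 1)) * (1 + u - s) ^ (-p) := by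
    have := intervalIntegral.integral_mono_ae_restrict hu0 hint1 hint2 hae
    rwa [intervalIntegral.integral_const_mul] at this
  have hconv := conv_bound p hp u hu0
  have hA : (0:ℝ) < (1 + u) ^ (-(p - 1)) := Real.rpow_pos_of_pos h1u _
  have hI0 : (0:ℝ) ≤ ∫ s in (0:ℝ)..u, (1 + s) ^ (-(p - 1)) * (1 + u - s) ^ (-p) := by
    apply intervalIntegral.integral_nonneg hu0
    intro x hx
    exact mul_nonneg (Real.rpow_nonneg (by linarith [hx.1]) _)
      (Real.rpow_nonneg (by linarith [hx.2]) _)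
  have hmono : (1 + u) ^ (-p) ≤ (1 + u) ^ (-(p - 1)) :=
    Real.rpow_le_rpow_of_exponent_le (by linarith) (by linarith)
  have hfinal := hineq u huIco
  -- combine everything
  have hchain : φ u ≤ C₁ * ε * (1 + u) ^ (-(p - 1))
      + 12 * C₁ ^ 2 * C₂ * ε ^ 2 * C₃ * (1 + u) ^ (-(p - 1)) := by
    have h1 : C₁ * ε * (1 + u) ^ (-p) ≤ C₁ * ε * (1 + u) ^ (-(p - 1)) := by
      apply mul_le_mul_of_nonneg_left hmono (by positivity)
    have h2 : C₂ * (∫ s in (0:ℝ)..u, (ε + φ s) * φ s * (1 + u - s) ^ (-p))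
        ≤ 12 * C₁ ^ 2 * C₂ * ε ^ 2 * C₃ * (1 + u) ^ (-(p - 1)) := by
      have h3 : (∫ s in (0:ℝ)..u, (ε + φ s) * φ s * (1 + u - s) ^ (-p))
          ≤ 12 * C₁ ^ 2 * ε ^ 2 * (C₃ * (1 + u) ^ (-(p - 1))) :=
        hJ.trans (mul_le_mul_of_nonneg_left hconv (by positivity))
      calc C₂ * (∫ s in (0:ℝ)..u, (ε + φ s) * φ s * (1 + u - s) ^ (-p))
          ≤ C₂ * (12 * C₁ ^ 2 * ε ^ 2 * (C₃ * (1 + u) ^ (-(p - 1)))) :=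
            mul_le_mul_of_nonneg_left h3 hC₂.le
        _ = 12 * C₁ ^ 2 * C₂ * ε ^ 2 * C₃ * (1 + u) ^ (-(p - 1)) := by ring
    linarith
  -- contradiction
  have hsmall2 : 12 * C₁ ^ 2 * C₂ * ε ^ 2 * C₃ ≤ (4/3) * C₁ * ε := by
    have h := mul_le_mul_of_nonneg_left hεC₃ (by positivity : (0:ℝ) ≤ (4/3) * (C₁ * ε))
    nlinarith [h]
  have hcontr : 3 * C₁ * ε * (1 + u) ^ (-(p - 1))
      ≤ (7/3) * C₁ * ε * (1 + u) ^ (-(p - 1)) := by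
    refine le_trans hulb (hchain.trans ?_)
    have := mul_le_mul_of_nonneg_right hsmall2 hA.le
    nlinarith
  nlinarith [mul_pos (mul_pos (by linarith : (0:ℝ) < C₁) hε) hA]
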